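/- Let U on X and V on Y be Hilbert space operators with closed range which are equivalent after extension. Then there exist invertible bounded operators K : ker U → ker V and K₊ : ker U* → ker V*. -/

import Mathlib

open ContinuousLinearMap

/-- 2×2 block operator matrix `[[A, B],[C, D]] : X ⊕ Y → X' ⊕ Y'`. -/
noncomputable def blk {X Y X' Y' : Type*} [NormedAddCommGroup X] [NormedSpace ℝ X]
    [NormedAddCommGroup Y] [NormedSpace ℝ Y] [NormedAddCommGroup X'] [NormedSpace ℝ X']
    [NormedAddCommGroup Y'] [NormedSpace ℝ Y']
    (A : X →L[ℝ] X') (B : Y →L[ℝ] X') (C : X →L[ℝ] Y') (D : Y →L[ℝ] Y') :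
    (X × Y) →L[ℝ] (X' × Y') :=
  (A.coprod B).prod (C.coprod D)

section blocks
variable {X Y X' Y' : Type*} [NormedAddCommGroup X] [NormedSpace ℝ X]
    [NormedAddCommGroup Y] [NormedSpace ℝ Y] [NormedAddCommGroup X'] [NormedSpace ℝ X']
    [NormedAddCommGroup Y'] [NormedSpace ℝ Y']

/-- (1,1)-entry of a block operator. -/
noncomputable def b11 (T : (X × Y) →L[ℝ] (X' × Y')) : X →L[ℝ] X' :=
  (ContinuousLinearMap.fst ℝ X' Y').comp (T.comp (ContinuousLinearMap.inl ℝ X Y))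

/-- (1,2)-entry of a block operator. -/
noncomputable def b12 (T : (X × Y) →L[ℝ] (X' × Y')) : Y →L[ℝ] X' :=
  (ContinuousLinearMap.fst ℝ X' Y').comp (T.comp (ContinuousLinearMap.inr ℝ X Y))

/-- (2,1)-entry of a block operator. -/
noncomputable def b21 (T : (X × Y) →L[ℝ] (X' × Y')) : X →L[ℝ] Y' :=
  (ContinuousLinearMap.snd ℝ X' Y').comp (T.comp (ContinuousLinearMap.inl ℝ X Y))

/-- (2,2)-entry of a block operator. -/
noncomputable def b22 (T : (X × Y) →L[ℝ] (X' × Y')) : Y →L[ℝ] Y' :=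
  (ContinuousLinearMap.snd ℝ X' Y').comp (T.comp (ContinuousLinearMap.inr ℝ X Y))

end blocks

section aux

open RealInnerProductSpace

variable {W Z W' Z' : Type*} [NormedAddCommGroup W] [NormedSpace ℝ W]
    [NormedAddCommGroup Z] [NormedSpace ℝ Z] [NormedAddCommGroup W'] [NormedSpace ℝ W']
    [NormedAddCommGroup Z'] [NormedSpace ℝ Z']

theorem blk_apply (A : W →L[ℝ] Z) (B : W' →L[ℝ] Z) (C : W →L[ℝ] Z') (D : W' →L[ℝ] Z')
    (x : W) (y : W') : blk A B C D (x, y) = (A x + B y, C x + D y) := rfl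

/-- General kernel equivalence: if `A = E ∘ B ∘ F` with `E` left-invertible and `F`
invertible, then `ker A ≃L ker B` via `F`. -/
noncomputable def kerEquivAux (A : W →L[ℝ] Z) (B : W' →L[ℝ] Z') (E : Z' →L[ℝ] Z)
    (Einv : Z →L[ℝ] Z') (F : W →L[ℝ] W') (Finv : W' →L[ℝ] W)
    (hE2 : Einv.comp E = ContinuousLinearMap.id ℝ Z')
    (hF1 : F.comp Finv = ContinuousLinearMap.id ℝ W')
    (hF2 : Finv.comp F = ContinuousLinearMap.id ℝ W)
    (hEq : A = E.comp (B.comp F)) :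
    ↥(LinearMap.ker (A : W →ₗ[ℝ] Z)) ≃L[ℝ] ↥(LinearMap.ker (B : W' →ₗ[ℝ] Z')) := by
  have hmemF : ∀ x ∈ LinearMap.ker (A : W →ₗ[ℝ] Z), F x ∈ LinearMap.ker (B : W' →ₗ[ℝ] Z') := by
    intro x hx
    have h1 : A x = 0 := hx
    have h2 : E (B (F x)) = 0 := by rw [hEq] at h1; exact h1
    have h3 : Einv (E (B (F x))) = B (F x) := DFunLike.congr_fun hE2 (B (F x))
    have : B (F x) = 0 := by rw [← h3, h2, map_zero]
    exact this
  have hmemFinv : ∀ y ∈ LinearMap.ker (B : W' →ₗ[ℝ] Z'), Finv y ∈ LinearMap.ker (A : W →ₗ[ℝ] Z) := by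
    intro y hy
    have h1 : B y = 0 := hy
    have h4 : F (Finv y) = y := DFunLike.congr_fun hF1 y
    have : A (Finv y) = 0 := by
      rw [hEq]; simp only [ContinuousLinearMap.comp_apply, h4, h1, map_zero]
    exact this
  refine ContinuousLinearEquiv.equivOfInverse
    ((F.comp (LinearMap.ker (A : W →ₗ[ℝ] Z)).subtypeL).codRestrict (LinearMap.ker (B : W' →ₗ[ℝ] Z'))
      (fun x => hmemF x.1 x.2))
    ((Finv.comp (LinearMap.ker (B : W' →ₗ[ℝ] Z')).subtypeL).codRestrict (LinearMap.ker (A : W →ₗ[ℝ] Z))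
      (fun y => hmemFinv y.1 y.2)) ?_ ?_
  · intro x
    ext
    exact DFunLike.congr_fun hF2 x.1
  · intro y
    ext
    exact DFunLike.congr_fun hF1 y.1

/-- The kernel of a diagonal block `[[W, 0], [0, I]]` is isomorphic to `ker W`. -/
noncomputable def kerBlkDiag (T : W →L[ℝ] Z) :
    ↥(LinearMap.ker ((blk T 0 0 (ContinuousLinearMap.id ℝ W')) : W × W' →ₗ[ℝ] Z × W')) ≃L[ℝ]
      ↥(LinearMap.ker (T : W →ₗ[ℝ] Z)) := by
  have hmem : ∀ p : W × W', p ∈ LinearMap.ker ((blk T 0 0 (ContinuousLinearMap.id ℝ W')) : W × W' →ₗ[ℝ] Z × W') ↔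
      T p.1 = 0 ∧ p.2 = 0 := by
    intro p
    constructor
    · intro hp
      have h : blk T 0 0 (ContinuousLinearMap.id ℝ W') (p.1, p.2) = 0 := hp
      rw [blk_apply] at h
      simp only [ContinuousLinearMap.zero_apply, add_zero, zero_add,
        ContinuousLinearMap.id_apply] at h
      exact ⟨congrArg Prod.fst h, congrArg Prod.snd h⟩
    · intro ⟨h1, h2⟩
      show blk T 0 0 (ContinuousLinearMap.id ℝ W') (p.1, p.2) = 0
      rw [blk_apply]
      simp [h1, h2]
  refine ContinuousLinearEquiv.equivOfInverse
    (((ContinuousLinearMap.fst ℝ W W').comp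
        (LinearMap.ker ((blk T 0 0 (ContinuousLinearMap.id ℝ W')) : W × W' →ₗ[ℝ] Z × W')).subtypeL).codRestrict
      (LinearMap.ker (T : W →ₗ[ℝ] Z)) (fun p => ((hmem p.1).mp p.2).1)
    )
    (((ContinuousLinearMap.inl ℝ W W').comp (LinearMap.ker (T : W →ₗ[ℝ] Z)).subtypeL).codRestrict
      (LinearMap.ker ((blk T 0 0 (ContinuousLinearMap.id ℝ W')) : W × W' →ₗ[ℝ] Z × W'))
      (fun x => (hmem (x.1, 0)).mpr ⟨x.2, rfl⟩)
    ) ?_ ?_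
  · intro p
    ext
    · rfl
    · exact (((hmem p.1).mp p.2).2).symm
  · intro x
    rfl

end aux

section fadjsec

open RealInnerProductSpace

variable {X X₀ Z Z₀ : Type*}
    [NormedAddCommGroup X] [InnerProductSpace ℝ X] [CompleteSpace X]
    [NormedAddCommGroup X₀] [InnerProductSpace ℝ X₀] [CompleteSpace X₀]
    [NormedAddCommGroup Z] [InnerProductSpace ℝ Z] [CompleteSpace Z]
    [NormedAddCommGroup Z₀] [InnerProductSpace ℝ Z₀] [CompleteSpace Z₀]

/-- Formal inner product on a product of Hilbert spaces. -/
noncomputable def ip (p q : X × X₀) : ℝ := ⟪p.1, q.1⟫ + ⟪p.2, q.2⟫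

/-- Formal (blockwise) adjoint of an operator between products of Hilbert spaces. -/
noncomputable def fadj (T : (X × X₀) →L[ℝ] (Z × Z₀)) : (Z × Z₀) →L[ℝ] (X × X₀) :=
  blk (ContinuousLinearMap.adjoint (b11 T)) (ContinuousLinearMap.adjoint (b21 T))
    (ContinuousLinearMap.adjoint (b12 T)) (ContinuousLinearMap.adjoint (b22 T))

theorem apply_eq_blocks (T : (X × X₀) →L[ℝ] (Z × Z₀)) (x : X) (y : X₀) :
    T (x, y) = (b11 T x + b12 T y, b21 T x + b22 T y) := by
  have h : T (x, y) = T (x, 0) + T (0, y) := by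
    rw [← map_add]; norm_num
  have h1 : b11 T x = (T (x, 0)).1 := rfl
  have h2 : b12 T y = (T (0, y)).1 := rfl
  have h3 : b21 T x = (T (x, 0)).2 := rfl
  have h4 : b22 T y = (T (0, y)).2 := rfl
  rw [h, h1, h2, h3, h4]
  rfl

theorem ip_fadj (T : (X × X₀) →L[ℝ] (Z × Z₀)) (p : X × X₀) (q : Z × Z₀) :
    ip (T p) q = ip p (fadj T q) := by
  obtain ⟨x, y⟩ := p
  obtain ⟨u, v⟩ := q
  rw [apply_eq_blocks]
  unfold fadj
  rw [blk_apply]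
  unfold ip
  simp only [inner_add_left, inner_add_right,
    ContinuousLinearMap.adjoint_inner_right]
  ring

theorem fadj_unique (T : (X × X₀) →L[ℝ] (Z × Z₀)) (S : (Z × Z₀) →L[ℝ] (X × X₀))
    (h : ∀ p q, ip (T p) q = ip p (S q)) : S = fadj T := by
  refine ContinuousLinearMap.ext fun q => ?_
  have hd : ∀ p : X × X₀, ip p (S q - fadj T q) = 0 := by
    intro p
    have h1 : ip p (S q) = ip p (fadj T q) := by rw [← h, ip_fadj]
    unfold ip at h1 ⊢
    simp only [Prod.fst_sub, Prod.snd_sub, inner_sub_right]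
    linarith
  have hd2 := hd (S q - fadj T q)
  unfold ip at hd2
  have h1 : (0:ℝ) ≤ ⟪(S q - fadj T q).1, (S q - fadj T q).1⟫ := real_inner_self_nonneg
  have h2 : (0:ℝ) ≤ ⟪(S q - fadj T q).2, (S q - fadj T q).2⟫ := real_inner_self_nonneg
  have e1 : ⟪(S q - fadj T q).1, (S q - fadj T q).1⟫ = (0:ℝ) := by linarith
  have e2 : ⟪(S q - fadj T q).2, (S q - fadj T q).2⟫ = (0:ℝ) := by linarith
  rw [inner_self_eq_zero] at e1 e2
  have : S q - fadj T q = 0 := Prod.ext e1 e2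
  exact sub_eq_zero.mp this

end fadjsec

section fadjcomp

open RealInnerProductSpace

variable {X X₀ Z Z₀ P P₀ : Type*}
    [NormedAddCommGroup X] [InnerProductSpace ℝ X] [CompleteSpace X]
    [NormedAddCommGroup X₀] [InnerProductSpace ℝ X₀] [CompleteSpace X₀]
    [NormedAddCommGroup Z] [InnerProductSpace ℝ Z] [CompleteSpace Z]
    [NormedAddCommGroup Z₀] [InnerProductSpace ℝ Z₀] [CompleteSpace Z₀]
    [NormedAddCommGroup P] [InnerProductSpace ℝ P] [CompleteSpace P]
    [NormedAddCommGroup P₀] [InnerProductSpace ℝ P₀] [CompleteSpace P₀]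

theorem fadj_comp (T : (Z × Z₀) →L[ℝ] (P × P₀)) (S : (X × X₀) →L[ℝ] (Z × Z₀)) :
    fadj (T.comp S) = (fadj S).comp (fadj T) := by
  refine (fadj_unique _ _ ?_).symm
  intro p q
  rw [ContinuousLinearMap.comp_apply, ContinuousLinearMap.comp_apply,
    ip_fadj T (S p) q, ip_fadj S p (fadj T q)]

theorem fadj_id : fadj (ContinuousLinearMap.id ℝ (X × X₀)) =
    ContinuousLinearMap.id ℝ (X × X₀) :=
  (fadj_unique _ _ (fun _ _ => rfl)).symm

theorem fadj_blk_diag (T : X →L[ℝ] Z) :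
    fadj (blk T 0 0 (ContinuousLinearMap.id ℝ X₀)) =
      blk (ContinuousLinearMap.adjoint T) 0 0 (ContinuousLinearMap.id ℝ X₀) := by
  refine (fadj_unique _ _ ?_).symm
  intro ⟨x, y⟩ ⟨u, v⟩
  rw [blk_apply, blk_apply]
  unfold ip
  simp only [ContinuousLinearMap.zero_apply, add_zero, zero_add,
    ContinuousLinearMap.id_apply, ContinuousLinearMap.adjoint_inner_right]

end fadjcomp

attribute [irreducible] fadj kerEquivAux kerBlkDiag blk

set_option maxHeartbeats 8000000 in
/-- Closed range Hilbert space operators that are equivalent after extension have isomorphic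
kernels and isomorphic cokernels. -/
theorem stmt16 {X Y X₀ Y₀ : Type*}
    [NormedAddCommGroup X] [InnerProductSpace ℝ X] [CompleteSpace X]
    [NormedAddCommGroup Y] [InnerProductSpace ℝ Y] [CompleteSpace Y]
    [NormedAddCommGroup X₀] [InnerProductSpace ℝ X₀] [CompleteSpace X₀]
    [NormedAddCommGroup Y₀] [InnerProductSpace ℝ Y₀] [CompleteSpace Y₀]
    (U : X →L[ℝ] X) (V : Y →L[ℝ] Y)
    (hU : IsClosed (Set.range U)) (hV : IsClosed (Set.range V))
    (E : (Y × Y₀) →L[ℝ] (X × X₀)) (Einv : (X × X₀) →L[ℝ] (Y × Y₀))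
    (F : (X × X₀) →L[ℝ] (Y × Y₀)) (Finv : (Y × Y₀) →L[ℝ] (X × X₀))
    (hE1 : E.comp Einv = ContinuousLinearMap.id ℝ (X × X₀))
    (hE2 : Einv.comp E = ContinuousLinearMap.id ℝ (Y × Y₀))
    (hF1 : F.comp Finv = ContinuousLinearMap.id ℝ (Y × Y₀))
    (hF2 : Finv.comp F = ContinuousLinearMap.id ℝ (X × X₀))
    (hEq : blk U 0 0 (ContinuousLinearMap.id ℝ X₀) =
      E.comp ((blk V 0 0 (ContinuousLinearMap.id ℝ Y₀)).comp F)) :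
    Nonempty (↥(LinearMap.ker (U : X →ₗ[ℝ] X)) ≃L[ℝ] ↥(LinearMap.ker (V : Y →ₗ[ℝ] Y))) ∧
    Nonempty (↥(LinearMap.ker ((ContinuousLinearMap.adjoint U : X →L[ℝ] X) : X →ₗ[ℝ] X)) ≃L[ℝ]
      ↥(LinearMap.ker ((ContinuousLinearMap.adjoint V : Y →L[ℝ] Y) : Y →ₗ[ℝ] Y))) := by
  constructor
  · exact ⟨((kerBlkDiag U).symm.trans
      (kerEquivAux _ _ E Einv F Finv hE2 hF1 hF2 hEq)).trans (kerBlkDiag V)⟩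
  · have hEq' : blk (ContinuousLinearMap.adjoint U) 0 0 (ContinuousLinearMap.id ℝ X₀) =
        (fadj F).comp
          ((blk (ContinuousLinearMap.adjoint V) 0 0 (ContinuousLinearMap.id ℝ Y₀)).comp
            (fadj E)) := by
      rw [← fadj_blk_diag, ← fadj_blk_diag, hEq, fadj_comp, fadj_comp,
        ContinuousLinearMap.comp_assoc]
    have hE2' : (fadj Finv).comp (fadj F) = ContinuousLinearMap.id ℝ (Y × Y₀) := by
      rw [← fadj_comp, hF1, fadj_id]
    have hF1' : (fadj E).comp (fadj Einv) = ContinuousLinearMap.id ℝ (Y × Y₀) := by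
      rw [← fadj_comp, hE2, fadj_id]
    have hF2' : (fadj Einv).comp (fadj E) = ContinuousLinearMap.id ℝ (X × X₀) := by
      rw [← fadj_comp, hE1, fadj_id]
    exact ⟨((kerBlkDiag (ContinuousLinearMap.adjoint U)).symm.trans
      (kerEquivAux _ _ (fadj F) (fadj Finv) (fadj E) (fadj Einv) hE2' hF1' hF2' hEq')).trans
      (kerBlkDiag (ContinuousLinearMap.adjoint V))⟩
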